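/- arXiv:2001.07389 — 4 statements merged into one kernel-verified Lean document; each statement's English description precedes it below -/
import Mathlib

section
/- Let Ω = 𝔻 \ {z : |z - 1/2| ≤ 1/2} be the crescent-shaped region, where 𝔻 is the open unit disk. Then the function γ_1(z) = 1/(1 - z) is square-integrable over Ω with respect to planar Lebesgue measure, i.e. ∫_Ω |1/(1-z)|^2 dm(z) < ∞. -/
open MeasureTheory Set Real

lemma aux_eq {t : ℝ} (ht : 0 < t) (y : ℝ) :
    t⁻¹ * (1 + ((Real.sqrt t)⁻¹ * y) ^ 2)⁻¹ = (t + y ^ 2)⁻¹ := by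
  have hs : Real.sqrt t ^ 2 = t := Real.sq_sqrt ht.le
  rw [mul_pow, inv_pow, hs, ← mul_inv]
  congr 1
  field_simp

lemma aux_integrable {t : ℝ} (ht : 0 < t) :
    Integrable (fun y : ℝ => (t + y ^ 2)⁻¹) := by
  have hc : (Real.sqrt t)⁻¹ ≠ 0 := inv_ne_zero (Real.sqrt_pos.mpr ht).ne'
  have h1 : Integrable (fun y : ℝ => (1 + ((Real.sqrt t)⁻¹ * y) ^ 2)⁻¹) :=
    integrable_inv_one_add_sq.comp_mul_left' hc
  exact (h1.const_mul t⁻¹).congr (Filter.Eventually.of_forall fun y => aux_eq ht y)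

lemma aux_value {t : ℝ} (ht : 0 < t) :
    ∫ y : ℝ, (t + y ^ 2)⁻¹ = π / Real.sqrt t := by
  have h := MeasureTheory.Measure.integral_comp_mul_left
    (fun y : ℝ => (1 + y ^ 2)⁻¹) (Real.sqrt t)⁻¹
  have hspos : 0 < Real.sqrt t := Real.sqrt_pos.mpr ht
  calc ∫ y : ℝ, (t + y ^ 2)⁻¹
      = ∫ y : ℝ, t⁻¹ * (1 + ((Real.sqrt t)⁻¹ * y) ^ 2)⁻¹ := by
        simp_rw [aux_eq ht]
    _ = t⁻¹ * ∫ y : ℝ, (1 + ((Real.sqrt t)⁻¹ * y) ^ 2)⁻¹ := integral_const_mul _ _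
    _ = t⁻¹ * (|((Real.sqrt t)⁻¹)⁻¹| • ∫ y : ℝ, (1 + y ^ 2)⁻¹) := by rw [h]
    _ = π / Real.sqrt t := by
        rw [integral_univ_inv_one_add_sq, inv_inv, abs_of_pos hspos,
          smul_eq_mul]
        have hs : Real.sqrt t ^ 2 = t := Real.sq_sqrt ht.le
        field_simp
        nlinarith [hs, Real.pi_pos, sq_nonneg (Real.sqrt t)]

noncomputable def Fr : ℝ × ℝ → ℝ :=
  ((Ioo (-1:ℝ) 1) ×ˢ (univ : Set ℝ)).indicator
    (fun q : ℝ × ℝ => 2 * ((1 - q.1) + q.2 ^ 2)⁻¹)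

lemma sqrt_inv_integrable :
    IntegrableOn (fun x : ℝ => (Real.sqrt (1 - x))⁻¹) (Ioo (-1:ℝ) 1) := by
  have h0 : IntegrableOn (fun u : ℝ => u ^ (-(1/2) : ℝ)) (Ioc (0:ℝ) 2) := by
    have h := intervalIntegral.intervalIntegrable_rpow'
      (a := (0:ℝ)) (b := 2) (show (-1:ℝ) < -(1/2) by norm_num)
    rwa [intervalIntegrable_iff, uIoc_of_le (by norm_num : (0:ℝ) ≤ 2)] at h
  have hφ : MeasurePreserving (fun x : ℝ => -x + 1) volume volume :=
    (measurePreserving_add_right volume (1:ℝ)).comp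
      (Measure.measurePreserving_neg volume)
  have hemb : MeasurableEmbedding (fun x : ℝ => -x + 1) :=
    ((MeasurableEquiv.neg ℝ).trans (MeasurableEquiv.addRight 1)).measurableEmbedding
  have hpre : (fun x : ℝ => -x + 1) ⁻¹' (Ioc (0:ℝ) 2) = Ico (-1:ℝ) 1 := by
    ext x
    simp only [mem_preimage, mem_Ioc, mem_Ico]
    constructor <;> intro h <;> constructor <;> linarith [h.1, h.2]
  have h1 : IntegrableOn ((fun u : ℝ => u ^ (-(1/2) : ℝ)) ∘ fun x : ℝ => -x + 1)
      (Ico (-1:ℝ) 1) volume := by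
    rw [← hpre]
    exact (hφ.integrableOn_comp_preimage hemb).mpr h0
  have h2 := h1.mono_set Ioo_subset_Ico_self
  refine h2.congr_fun ?_ measurableSet_Ioo
  intro x hx
  have hx1 : (0:ℝ) ≤ 1 - x := by linarith [hx.2]
  simp only [Function.comp]
  rw [show -x + 1 = 1 - x by ring, Real.rpow_neg hx1, ← Real.sqrt_eq_rpow]

lemma Fr_integrable : Integrable Fr volume := by
  have hmF : Measurable Fr := by
    apply Measurable.indicator
    · exact (((measurable_const.sub measurable_fst).add
        (measurable_snd.pow measurable_const)).inv).const_mul 2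
    · exact measurableSet_Ioo.prod MeasurableSet.univ
  rw [Measure.volume_eq_prod, integrable_prod_iff (by
    rw [← Measure.volume_eq_prod]; exact hmF.aestronglyMeasurable)]
  have hslice : ∀ x : ℝ, x ∈ Ioo (-1:ℝ) 1 →
      (fun y : ℝ => Fr (x, y)) = fun y : ℝ => 2 * ((1 - x) + y ^ 2)⁻¹ := by
    intro x hx
    funext y
    simp [Fr, indicator, hx.1, hx.2]
  have hslice0 : ∀ x : ℝ, x ∉ Ioo (-1:ℝ) 1 → (fun y : ℝ => Fr (x, y)) = 0 := by
    intro x hx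
    funext y
    simp only [Fr, indicator, mem_prod, mem_Ioo, mem_univ, and_true]
    rw [if_neg (by simpa [mem_Ioo] using hx)]
    rfl
  constructor
  · refine Filter.Eventually.of_forall fun x => ?_
    by_cases hx : x ∈ Ioo (-1:ℝ) 1
    · rw [hslice x hx]
      exact (aux_integrable (by linarith [hx.2] : (0:ℝ) < 1 - x)).const_mul 2
    · rw [hslice0 x hx]; exact integrable_zero _ _ _
  · have hkey : (fun x : ℝ => ∫ y : ℝ, ‖Fr (x, y)‖) =
        (Ioo (-1:ℝ) 1).indicator (fun x => 2 * (π / Real.sqrt (1 - x))) := by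
      funext x
      by_cases hx : x ∈ Ioo (-1:ℝ) 1
      · have ht : (0:ℝ) < 1 - x := by linarith [hx.2]
        rw [indicator_of_mem hx]
        have hnn : ∀ y : ℝ, ‖2 * ((1 - x) + y ^ 2)⁻¹‖ = 2 * ((1 - x) + y ^ 2)⁻¹ := by
          intro y
          apply Real.norm_of_nonneg
          positivity
        rw [show (fun y : ℝ => ‖Fr (x, y)‖) = fun y => 2 * ((1 - x) + y ^ 2)⁻¹ from
          funext fun y => by rw [congrFun (hslice x hx) y]; exact hnn y]
        rw [integral_const_mul, aux_value ht]
      · rw [indicator_of_notMem hx,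
          show (fun y : ℝ => ‖Fr (x, y)‖) = fun _ => (0:ℝ) from
            funext fun y => by rw [congrFun (hslice0 x hx) y]; simp]
        simp
    rw [hkey]
    rw [integrable_indicator_iff measurableSet_Ioo]
    exact IntegrableOn.congr_fun (sqrt_inv_integrable.const_mul (2 * π))
      (fun x _ => by rw [div_eq_mul_inv]; ring) measurableSet_Ioo

lemma G_integrable : IntegrableOn (fun z : ℂ => 2 * ((1 - z.re) + z.im ^ 2)⁻¹)
    {z : ℂ | -1 < z.re ∧ z.re < 1} volume := by
  have hs : MeasurableSet {z : ℂ | -1 < z.re ∧ z.re < 1} :=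
    (measurableSet_lt measurable_const Complex.measurable_re).inter
      (measurableSet_lt Complex.measurable_re measurable_const)
  rw [← integrable_indicator_iff hs]
  have h := (Complex.volume_preserving_equiv_real_prod.integrable_comp_emb
    Complex.measurableEquivRealProd.measurableEmbedding).mpr Fr_integrable
  refine h.congr (Filter.Eventually.of_forall fun z => ?_)
  simp only [Function.comp, Complex.measurableEquivRealProd_apply, Fr, indicator]
  by_cases hz : z ∈ {z : ℂ | -1 < z.re ∧ z.re < 1}
  · rw [if_pos hz]; exact if_pos (by simpa [mem_prod, mem_Ioo] using hz)
  · rw [if_neg hz]; exact if_neg (by simpa [mem_prod, mem_Ioo] using hz)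

theorem stmt4 :
    IntegrableOn (fun z : ℂ => ‖(1 - z)⁻¹‖ ^ 2)
      {z : ℂ | ‖z‖ < 1 ∧ 1/2 < ‖z - 1/2‖} volume := by
  set S : Set ℂ := {z : ℂ | ‖z‖ < 1 ∧ 1/2 < ‖z - 1/2‖} with hS
  have hSm : MeasurableSet S :=
    ((isOpen_lt continuous_norm continuous_const).inter
      (isOpen_lt continuous_const ((continuous_id.sub continuous_const).norm))).measurableSet
  have hnormsq : ∀ w : ℂ, ‖w‖ ^ 2 = w.re ^ 2 + w.im ^ 2 := by
    intro w
    rw [Complex.sq_norm, Complex.normSq_apply]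
    ring
  have hsub : S ⊆ {z : ℂ | -1 < z.re ∧ z.re < 1} := by
    intro z hz
    have h1 : ‖z‖ < 1 := hz.1
    have h2 : ‖z‖ ^ 2 < 1 := by nlinarith [norm_nonneg z]
    rw [hnormsq z] at h2
    constructor <;> nlinarith [sq_nonneg z.im]
  have hG := G_integrable.mono_set hsub
  refine Integrable.mono hG ?_ ?_
  · exact (((measurable_const.sub measurable_id).inv.norm.pow
      measurable_const).aestronglyMeasurable)
  · refine ae_restrict_of_forall_mem hSm fun z hz => ?_
    have h2 : ‖z‖ ^ 2 < 1 := by nlinarith [norm_nonneg z, hz.1]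
    rw [hnormsq z] at h2
    have hxlt : z.re < 1 := by nlinarith [sq_nonneg z.im]
    have h3 : (1:ℝ)/4 < (z.re - 1/2) ^ 2 + z.im ^ 2 := by
      have h := hz.2
      have hsq : (1:ℝ)/4 < ‖z - 1/2‖ ^ 2 := by nlinarith [norm_nonneg (z - 1/2)]
      rw [hnormsq (z - 1/2)] at hsq
      have hre : (z - 1/2).re = z.re - 1/2 := by simp
      have him : (z - 1/2).im = z.im := by simp
      rw [hre, him] at hsq
      exact hsq
    have hval : ‖(1 - z)⁻¹‖ ^ 2 = ((1 - z.re) ^ 2 + z.im ^ 2)⁻¹ := by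
      rw [norm_inv, inv_pow]
      congr 1
      rw [hnormsq (1 - z)]
      simp
    have ha : 0 < (1 - z.re) ^ 2 + z.im ^ 2 :=
      add_pos_of_pos_of_nonneg (pow_pos (by linarith) 2) (sq_nonneg _)
    have hb : 0 < (1 - z.re) + z.im ^ 2 :=
      add_pos_of_pos_of_nonneg (by linarith) (sq_nonneg _)
    have hkey : (1 - z.re) + z.im ^ 2 ≤ 2 * ((1 - z.re) ^ 2 + z.im ^ 2) := by
      nlinarith [h3, hxlt]
    rw [hval, Real.norm_of_nonneg (by positivity), Real.norm_of_nonneg (by positivity)]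
    rw [inv_eq_one_div, inv_eq_one_div, ← mul_div_assoc, mul_one, div_le_div_iff₀ ha hb]
    linarith [mul_le_mul_of_nonneg_left hkey (le_of_lt ha)]
end

section
/- There exist constants C > 0 such that for all k ∈ ℕ sufficiently large and all r ∈ (0,1), ∫_{e^{1/r}}^∞ e^{-u} u^{-1} (log u)^{2k} du ≤ C · 5^k · (log k)^{2k}. In particular the integral is O(k^2 (log(k^2))^{2k}) as k → ∞. -/
open MeasureTheory Real Set

lemma gammaI (m : ℕ) :
    IntegrableOn (fun x : ℝ => Real.exp (-x) * x ^ m) (Set.Ioi 0) ∧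
    (∫ x in Set.Ioi (0:ℝ), Real.exp (-x) * x ^ m) = (Nat.factorial m : ℝ) := by
  have h1 : (0:ℝ) < (m:ℝ) + 1 := by positivity
  have h2 : ∀ x : ℝ, Real.exp (-x) * x ^ (((m:ℝ) + 1) - 1) = Real.exp (-x) * x ^ m := by
    intro x; rw [add_sub_cancel_right, Real.rpow_natCast]
  constructor
  · have := Real.GammaIntegral_convergent h1
    simpa only [h2] using this
  · have h3 := Real.Gamma_eq_integral h1
    rw [Real.Gamma_nat_eq_factorial] at h3
    simp only [h2] at h3
    exact h3.symm

lemma expInt (a : ℝ) : IntegrableOn (fun x : ℝ => Real.exp (-x)) (Set.Ioi a) := by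
  have := exp_neg_integrableOn_Ioi a (one_pos)
  simpa using this

lemma main_bound (k : ℕ) (hk : 8 ≤ k) (a : ℝ) (ha : 1 ≤ a) :
    (∫ u in Set.Ioi a, Real.exp (-u) * u⁻¹ * Real.log u ^ (2*k))
      ≤ 2 * 4 ^ k * Real.log k ^ (2*k) := by
  have hk0 : (0:ℝ) < k := by positivity
  have hk8 : (8:ℝ) ≤ (k:ℝ) := by exact_mod_cast hk
  set L : ℝ := Real.log k with hLdef
  have hL2 : 2 ≤ L := by
    rw [hLdef, Real.le_log_iff_exp_le hk0]
    have h1 := Real.exp_one_lt_d9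
    have : Real.exp 2 = Real.exp 1 * Real.exp 1 := by
      rw [← Real.exp_add]; norm_num
    nlinarith [Real.exp_pos 1]
  have hL0 : 0 < L := by linarith
  have hLk : L ≤ (k:ℝ) := by
    have := Real.log_le_sub_one_of_pos hk0
    linarith
  set v : ℝ := 2 * k / L with hvdef
  have hv0 : 0 < v := by positivity
  have hv1 : 1 ≤ v := by
    rw [hvdef, le_div_iff₀ hL0]; nlinarith
  have hvk : v ≤ (k:ℝ) := by
    rw [hvdef, div_le_iff₀ hL0]; nlinarith
  have hlogv0 : 0 ≤ Real.log v := Real.log_nonneg hv1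
  have hlogvL : Real.log v ≤ L := by
    rw [hLdef]; exact Real.log_le_log hv0 hvk
  -- the dominating function
  set g : ℝ → ℝ := fun u => (4:ℝ)^k * (L ^ (2*k) * Real.exp (-u))
      + (4:ℝ)^k * ((L / (2*k)) ^ (2*k) * (Real.exp (-u) * u ^ (2*k-1))) with hgdef
  set f : ℝ → ℝ := fun u => Real.exp (-u) * u⁻¹ * Real.log u ^ (2*k) with hfdef
  -- pointwise bound on Ioi 1
  have hfg : ∀ u ∈ Set.Ioi (1:ℝ), f u ≤ g u := by
    intro u hu
    have hu1 : 1 < u := hu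
    have hu0 : 0 < u := by linarith
    have hlogu : 0 ≤ Real.log u := Real.log_nonneg hu1.le
    have hui : u⁻¹ ≤ 1 := by
      exact inv_le_one_of_one_le₀ hu1.le
    have he : (0:ℝ) < Real.exp (-u) := Real.exp_pos _
    have step1 : Real.log u ≤ Real.log v + u / v := by
      have h := Real.log_le_sub_one_of_pos (show 0 < u / v by positivity)
      rw [Real.log_div (ne_of_gt hu0) (ne_of_gt hv0)] at h
      linarith
    have step2 : Real.log u ^ (2*k) ≤ (Real.log v + u / v) ^ (2*k) :=
      pow_le_pow_left₀ hlogu step1 _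
    have step3 : (Real.log v + u / v) ^ (2*k)
        ≤ (4:ℝ)^k * (Real.log v ^ (2*k) + (u / v) ^ (2*k)) := by
      refine (add_pow_le hlogv0 (by positivity) (2*k)).trans ?_
      have h4 : (4:ℝ)^k = 2^(2*k) := by
        rw [pow_mul]; norm_num
      rw [h4]
      apply mul_le_mul_of_nonneg_right _ (by positivity)
      exact pow_le_pow_right₀ one_le_two (by omega)
    have hsplit : u⁻¹ * (u / v) ^ (2*k) = (L / (2*k)) ^ (2*k) * u ^ (2*k-1) := by
      have hiv : 1 / v = L / (2*k) := by
        rw [hvdef]; field_simp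
      have hupow : u ^ (2*k) = u * u ^ (2*k-1) := by
        rw [← pow_succ']; congr 1; omega
      rw [← hiv, div_pow, hupow, one_div, div_pow]
      have hLL : L ^ (k*2) * L⁻¹ ^ (k*2) = 1 := by
        rw [← mul_pow, mul_inv_cancel₀ hL0.ne', one_pow]
      field_simp [hu0.ne', hL0.ne']
      rw [hiv, ← mul_pow]; congr 1; field_simp
    have step4 : Real.log v ^ (2*k) ≤ L ^ (2*k) := pow_le_pow_left₀ hlogv0 hlogvL _
    calc f u = Real.exp (-u) * u⁻¹ * Real.log u ^ (2*k) := rfl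
      _ ≤ Real.exp (-u) * u⁻¹ * ((4:ℝ)^k * (Real.log v ^ (2*k) + (u / v) ^ (2*k))) := by
            have := step2.trans step3
            have hnn : (0:ℝ) ≤ Real.exp (-u) * u⁻¹ := by positivity
            exact mul_le_mul_of_nonneg_left this hnn
      _ = (4:ℝ)^k * (Real.exp (-u) * u⁻¹ * Real.log v ^ (2*k))
            + (4:ℝ)^k * (Real.exp (-u) * (u⁻¹ * (u / v) ^ (2*k))) := by ring
      _ ≤ (4:ℝ)^k * (L ^ (2*k) * Real.exp (-u))
            + (4:ℝ)^k * ((L / (2*k)) ^ (2*k) * (Real.exp (-u) * u ^ (2*k-1))) := by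
            rw [hsplit]
            apply add_le_add
            · apply mul_le_mul_of_nonneg_left _ (by positivity : (0:ℝ) ≤ (4:ℝ)^k)
              calc Real.exp (-u) * u⁻¹ * Real.log v ^ (2*k)
                    ≤ Real.exp (-u) * 1 * L ^ (2*k) := by
                      apply mul_le_mul
                      · exact mul_le_mul_of_nonneg_left hui he.le
                      · exact step4
                      · positivity
                      · positivity
                  _ = L ^ (2*k) * Real.exp (-u) := by ring
            · exact le_of_eq (by ring)
      _ = g u := rfl
  -- nonnegativity of f on Ioi 1
  have hfnn : ∀ u ∈ Set.Ioi (1:ℝ), 0 ≤ f u := by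
    intro u hu
    have hu0 : (0:ℝ) < u := lt_trans one_pos hu
    have : 0 ≤ Real.log u := Real.log_nonneg (le_of_lt hu)
    positivity
  -- integrability of f on Ioi 1
  have hfmeas : AEStronglyMeasurable f (volume.restrict (Set.Ioi (1:ℝ))) := by
    apply Measurable.aestronglyMeasurable
    exact ((Real.measurable_exp.comp measurable_neg).mul measurable_inv).mul
      (Real.measurable_log.pow_const _)
  have hfi : IntegrableOn f (Set.Ioi (1:ℝ)) := by
    refine Integrable.mono' (((gammaI (2*k)).1).mono_set (Set.Ioi_subset_Ioi zero_le_one)) hfmeas ?_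
    filter_upwards [ae_restrict_mem measurableSet_Ioi] with u hu
    have hu1 : (1:ℝ) < u := hu
    have hu0 : (0:ℝ) < u := lt_trans one_pos hu1
    have hlogu : 0 ≤ Real.log u := Real.log_nonneg hu1.le
    have hui : u⁻¹ ≤ 1 := by exact inv_le_one_of_one_le₀ hu1.le
    rw [Real.norm_eq_abs, abs_of_nonneg (by positivity)]
    have hloguu : Real.log u ^ (2*k) ≤ u ^ (2*k) := by
      apply pow_le_pow_left₀ hlogu
      have := Real.log_le_sub_one_of_pos hu0
      linarith
    calc Real.exp (-u) * u⁻¹ * Real.log u ^ (2*k)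
        ≤ Real.exp (-u) * 1 * u ^ (2*k) := by
          apply mul_le_mul
          · exact mul_le_mul_of_nonneg_left hui (Real.exp_pos _).le
          · exact hloguu
          · positivity
          · positivity
      _ = Real.exp (-u) * u ^ (2*k) := by ring
  -- integrability of g on Ioi 1
  have hgi : IntegrableOn g (Set.Ioi (1:ℝ)) := by
    apply Integrable.add
    · exact (((expInt 1)).const_mul _).const_mul _
    · exact ((((gammaI (2*k-1)).1).mono_set (Set.Ioi_subset_Ioi zero_le_one)).const_mul _).const_mul _
  -- step B: reduce to Ioi 1
  have hstepB : (∫ u in Set.Ioi a, f u) ≤ ∫ u in Set.Ioi (1:ℝ), f u := by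
    apply setIntegral_mono_set hfi
    · filter_upwards [ae_restrict_mem measurableSet_Ioi] with u hu using hfnn u hu
    · exact HasSubset.Subset.eventuallyLE (Set.Ioi_subset_Ioi ha)
  -- step C: integral of f ≤ integral of g
  have hstepC : (∫ u in Set.Ioi (1:ℝ), f u) ≤ ∫ u in Set.Ioi (1:ℝ), g u :=
    setIntegral_mono_on hfi hgi measurableSet_Ioi hfg
  -- compute/bound integral of g
  have hI2 : (∫ u in Set.Ioi (1:ℝ), Real.exp (-u) * u ^ (2*k-1))
      ≤ (Nat.factorial (2*k-1) : ℝ) := by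
    rw [← (gammaI (2*k-1)).2]
    apply setIntegral_mono_set (gammaI (2*k-1)).1
    · filter_upwards [ae_restrict_mem measurableSet_Ioi] with u hu
      have : (0:ℝ) < u := hu
      positivity
    · exact HasSubset.Subset.eventuallyLE (Set.Ioi_subset_Ioi zero_le_one)
  have hgval : (∫ u in Set.Ioi (1:ℝ), g u)
      = (4:ℝ)^k * (L ^ (2*k) * Real.exp (-1))
        + (4:ℝ)^k * ((L / (2*k)) ^ (2*k) * (∫ u in Set.Ioi (1:ℝ), Real.exp (-u) * u ^ (2*k-1))) := by
    rw [hgdef]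
    rw [integral_add ((((expInt 1)).const_mul _).const_mul _)
      (((((gammaI (2*k-1)).1).mono_set (Set.Ioi_subset_Ioi zero_le_one)).const_mul _).const_mul _)]
    rw [integral_const_mul, integral_const_mul, integral_const_mul, integral_const_mul,
      integral_exp_neg_Ioi]
  -- factorial bound
  have hfact : (Nat.factorial (2*k-1) : ℝ) ≤ (2*(k:ℝ)) ^ (2*k) := by
    have h1 : Nat.factorial (2*k-1) ≤ (2*k) ^ (2*k) := by
      calc Nat.factorial (2*k-1) ≤ (2*k-1) ^ (2*k-1) := Nat.factorial_le_pow _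
        _ ≤ (2*k) ^ (2*k-1) := Nat.pow_le_pow_left (by omega) _
        _ ≤ (2*k) ^ (2*k) := Nat.pow_le_pow_right (by omega) (by omega)
    exact_mod_cast h1
  have hterm2 : (L / (2*k)) ^ (2*k) * (Nat.factorial (2*k-1) : ℝ) ≤ L ^ (2*k) := by
    have h2k0 : (0:ℝ) < 2*(k:ℝ) := by positivity
    calc (L / (2*k)) ^ (2*k) * (Nat.factorial (2*k-1) : ℝ)
        ≤ (L / (2*(k:ℝ))) ^ (2*k) * ((2*(k:ℝ)) ^ (2*k)) := by
          exact mul_le_mul_of_nonneg_left hfact (by positivity)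
      _ = (L / (2*(k:ℝ)) * (2*(k:ℝ))) ^ (2*k) := (mul_pow _ _ _).symm
      _ = L ^ (2*k) := by rw [div_mul_cancel₀ _ (ne_of_gt h2k0)]
  -- combine
  have hgle : (∫ u in Set.Ioi (1:ℝ), g u) ≤ 2 * 4 ^ k * L ^ (2*k) := by
    rw [hgval]
    have hI2' : (4:ℝ)^k * ((L / (2*k)) ^ (2*k) * (∫ u in Set.Ioi (1:ℝ), Real.exp (-u) * u ^ (2*k-1)))
        ≤ (4:ℝ)^k * L ^ (2*k) := by
      apply mul_le_mul_of_nonneg_left _ (by positivity)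
      calc (L / (2*k)) ^ (2*k) * (∫ u in Set.Ioi (1:ℝ), Real.exp (-u) * u ^ (2*k-1))
          ≤ (L / (2*k)) ^ (2*k) * (Nat.factorial (2*k-1) : ℝ) := by
            apply mul_le_mul_of_nonneg_left hI2 (by positivity)
        _ ≤ L ^ (2*k) := hterm2
    have hI1' : (4:ℝ)^k * (L ^ (2*k) * Real.exp (-1)) ≤ (4:ℝ)^k * L ^ (2*k) := by
      have h1 : Real.exp (-1:ℝ) ≤ 1 := Real.exp_le_one_iff.mpr (by norm_num)
      have h2 : L ^ (2*k) * Real.exp (-1:ℝ) ≤ L ^ (2*k) * 1 :=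
        mul_le_mul_of_nonneg_left h1 (by positivity)
      rw [mul_one] at h2
      exact mul_le_mul_of_nonneg_left h2 (by positivity)
    linarith
  calc (∫ u in Set.Ioi a, f u) ≤ ∫ u in Set.Ioi (1:ℝ), f u := hstepB
    _ ≤ ∫ u in Set.Ioi (1:ℝ), g u := hstepC
    _ ≤ 2 * 4 ^ k * L ^ (2*k) := hgle

theorem stmt6 :
    (∃ C > (0:ℝ), ∃ K : ℕ, ∀ k : ℕ, K ≤ k → ∀ r ∈ Set.Ioo (0:ℝ) 1,
      (∫ u in Set.Ioi (Real.exp (1/r)), Real.exp (-u) * u⁻¹ * Real.log u ^ (2*k))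
        ≤ C * 5 ^ k * Real.log k ^ (2*k)) ∧
    (∃ C > (0:ℝ), ∃ K : ℕ, ∀ k : ℕ, K ≤ k → ∀ r ∈ Set.Ioo (0:ℝ) 1,
      (∫ u in Set.Ioi (Real.exp (1/r)), Real.exp (-u) * u⁻¹ * Real.log u ^ (2*k))
        ≤ C * (k:ℝ)^2 * Real.log ((k:ℝ)^2) ^ (2*k)) := by
  constructor
  · refine ⟨2, by norm_num, 8, ?_⟩
    intro k hk r hr
    have ha : (1:ℝ) ≤ Real.exp (1/r) := Real.one_le_exp (one_div_nonneg.mpr hr.1.le)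
    refine (main_bound k hk _ ha).trans ?_
    have hk1 : (1:ℝ) ≤ (k:ℝ) := by exact_mod_cast le_trans (by norm_num) hk
    have hL0 : 0 ≤ Real.log k := Real.log_nonneg hk1
    have h45 : (4:ℝ)^k ≤ 5^k := pow_le_pow_left₀ (by norm_num) (by norm_num) k
    have := mul_le_mul_of_nonneg_left h45 (by norm_num : (0:ℝ) ≤ 2)
    exact mul_le_mul_of_nonneg_right this (by positivity)
  · refine ⟨2, by norm_num, 8, ?_⟩
    intro k hk r hr
    have ha : (1:ℝ) ≤ Real.exp (1/r) := Real.one_le_exp (one_div_nonneg.mpr hr.1.le)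
    refine (main_bound k hk _ ha).trans ?_
    have hk1 : (1:ℝ) ≤ (k:ℝ) := by exact_mod_cast le_trans (by norm_num) hk
    have hL0 : 0 ≤ Real.log k := Real.log_nonneg hk1
    have hlog2 : Real.log ((k:ℝ)^2) = 2 * Real.log k := by
      rw [Real.log_pow]; norm_num
    rw [hlog2]
    have hpow : ((2:ℝ) * Real.log k) ^ (2*k) = 4^k * Real.log k ^ (2*k) := by
      rw [mul_pow]; congr 1
      rw [pow_mul]; norm_num
    rw [hpow]
    have hX : (0:ℝ) ≤ 4^k * Real.log k ^ (2*k) := by positivity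
    have hk2 : (1:ℝ) ≤ (k:ℝ)^2 := by nlinarith
    nlinarith [mul_le_mul_of_nonneg_right hk2 hX]
end

section
/- Let s(t) = exp(-exp(1/|t|)) for t ≠ 0, s(0) = 0, and for r ∈ (0,1) let E_r = {t + is : |t| ≤ r, |s| ≤ s(t)} ⊆ ℂ. Then for every k ∈ ℕ, ∫_{E_r} |t + is|^{-(2k+2)} dt ds ≤ 4 ∫_0^r s(t) t^{-(2k+2)} dt < ∞. -/
open MeasureTheory

theorem stmt14 (s : ℝ → ℝ) (hs : ∀ t : ℝ, t ≠ 0 → s t = Real.exp (-Real.exp (1/|t|)))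
    (hs0 : s 0 = 0) (r : ℝ) (hr : r ∈ Set.Ioo (0:ℝ) 1) (k : ℕ) :
    (∫⁻ p in {p : ℝ × ℝ | |p.1| ≤ r ∧ |p.2| ≤ s p.1},
        ENNReal.ofReal ((Real.sqrt (p.1 ^ 2 + p.2 ^ 2) ^ (2*k+2))⁻¹))
      ≤ ENNReal.ofReal (4 * ∫ t in Set.Ioo (0:ℝ) r, s t / t ^ (2*k+2)) ∧
    IntegrableOn (fun t => s t / t ^ (2*k+2)) (Set.Ioo (0:ℝ) r) volume := by
  open Set in
  obtain ⟨hr0, hr1⟩ := hr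
  -- basic properties of s
  have hsfun : s = fun t => if t = 0 then 0 else Real.exp (-Real.exp (1/|t|)) := by
    funext t
    rcases eq_or_ne t 0 with h | h
    · simp [h, hs0]
    · simp [h, hs t h]
  have hsmeas : Measurable s := by
    rw [hsfun]
    exact Measurable.ite (measurableSet_singleton 0) measurable_const
      ((Real.measurable_exp.comp ((Real.measurable_exp.comp
        (measurable_const.div measurable_abs)).neg)))
  have hs_nonneg : ∀ t, 0 ≤ s t := by
    intro t; rw [hsfun]; by_cases h : t = 0 <;> simp [h, (Real.exp_pos _).le]
  have hs_even : ∀ t, s (-t) = s t := by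
    intro t; rw [hsfun]; by_cases h : t = 0 <;> simp [h]
  set n := 2*k+2 with hn
  -- boundedness of s t / t ^ n on (0, r)
  have hbd : ∀ t ∈ Ioo (0:ℝ) r, s t / t ^ n ≤ (Nat.factorial n : ℝ) := by
    intro t ht
    obtain ⟨ht0, htr⟩ := ht
    have htn : (0:ℝ) < t ^ n := pow_pos ht0 n
    rw [div_le_iff₀ htn]
    have h1 : s t = Real.exp (-Real.exp (1/t)) := by
      rw [hs t ht0.ne', abs_of_pos ht0]
    have h2 : (1/t) ≤ Real.exp (1/t) := by
      have := Real.add_one_le_exp (1/t); linarith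
    have h3 : s t ≤ Real.exp (-(1/t)) := by
      rw [h1]; exact Real.exp_le_exp.2 (neg_le_neg h2)
    have h4 : (1/t) ^ n / (Nat.factorial n : ℝ) ≤ Real.exp (1/t) :=
      Real.pow_div_factorial_le_exp (x := 1/t) (by positivity) n
    have h5 : Real.exp (-(1/t)) = (Real.exp (1/t))⁻¹ := Real.exp_neg _
    have hfac : (0:ℝ) < (Nat.factorial n : ℝ) := by positivity
    have h6 : (Real.exp (1/t))⁻¹ ≤ ((1/t) ^ n / (Nat.factorial n : ℝ))⁻¹ := by
      apply inv_anti₀ _ h4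
      positivity
    have h7 : ((1/t) ^ n / (Nat.factorial n : ℝ))⁻¹ = (Nat.factorial n : ℝ) * t ^ n := by
      rw [one_div, inv_pow]
      field_simp
    calc s t ≤ Real.exp (-(1/t)) := h3
      _ = (Real.exp (1/t))⁻¹ := h5
      _ ≤ ((1/t) ^ n / (Nat.factorial n : ℝ))⁻¹ := h6
      _ = (Nat.factorial n : ℝ) * t ^ n := h7
  -- integrability
  have hint : IntegrableOn (fun t => s t / t ^ n) (Ioo (0:ℝ) r) volume := by
    have hmeas : AEStronglyMeasurable (fun t => s t / t ^ n) (volume.restrict (Ioo 0 r)) :=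
      (hsmeas.div ((measurable_id.pow_const n))).aestronglyMeasurable
    apply Integrable.mono' (integrableOn_const (C := (Nat.factorial n : ℝ)) measure_Ioo_lt_top.ne) hmeas
    filter_upwards [ae_restrict_mem measurableSet_Ioo] with t ht
    rw [Real.norm_eq_abs, abs_of_nonneg (div_nonneg (hs_nonneg t) (pow_nonneg ht.1.le n))]
    exact hbd t ht
  refine ⟨?_, hint⟩
  -- the main estimate
  have hneven : Even n := ⟨k+1, by omega⟩
  have hfnn : ∀ t : ℝ, 0 ≤ s t / t ^ n :=
    fun t => div_nonneg (hs_nonneg t) (hneven.pow_nonneg t)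
  set c : ℝ → ENNReal := fun t => ENNReal.ofReal ((|t| ^ n)⁻¹) with hc
  have hcmeas : Measurable c := ((measurable_abs.pow_const n).inv).ennreal_ofReal
  set E : Set (ℝ × ℝ) := {p : ℝ × ℝ | |p.1| ≤ r ∧ |p.2| ≤ s p.1} with hE
  have hEmeas : MeasurableSet E := by
    rw [hE, Set.setOf_and]
    exact (measurableSet_le measurable_fst.abs measurable_const).inter
      (measurableSet_le measurable_snd.abs (hsmeas.comp measurable_fst))
  -- Step 1: pointwise bound
  have step1 : (∫⁻ p in E, ENNReal.ofReal ((Real.sqrt (p.1 ^ 2 + p.2 ^ 2) ^ n)⁻¹))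
      ≤ ∫⁻ p in E, c p.1 := by
    apply setLIntegral_mono (hcmeas.comp measurable_fst)
    intro p hp
    apply ENNReal.ofReal_le_ofReal
    rcases eq_or_ne p.1 0 with h | h
    · have hp2 : p.2 = 0 := by
        have h2 := hp.2; rw [h, hs0] at h2
        exact abs_nonpos_iff.1 h2
      simp [h, hp2, hn]
    · have habs : 0 < |p.1| := abs_pos.2 h
      have hsq : |p.1| ≤ Real.sqrt (p.1^2 + p.2^2) := by
        rw [← Real.sqrt_sq_eq_abs]
        exact Real.sqrt_le_sqrt (by nlinarith [sq_nonneg p.2])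
      exact inv_anti₀ (pow_pos habs n) (pow_le_pow_left₀ habs.le hsq n)
  set h : ℝ → ENNReal := fun t => c t * ENNReal.ofReal (2 * s t) with hh
  have hhmeas : Measurable h := hcmeas.mul ((hsmeas.const_mul 2).ennreal_ofReal)
  -- Step 2: Tonelli
  have step2 : (∫⁻ p in E, c p.1) = ∫⁻ t in Icc (-r) r, h t := by
    rw [← lintegral_indicator hEmeas]
    rw [MeasureTheory.Measure.volume_eq_prod ℝ ℝ,
      lintegral_prod (E.indicator fun p => c p.1)
        ((hcmeas.comp measurable_fst).indicator hEmeas).aemeasurable]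
    have inner : ∀ t : ℝ, (∫⁻ y, E.indicator (fun p => c p.1) (t, y))
        = (Icc (-r) r).indicator h t := by
      intro t
      by_cases htr : |t| ≤ r
      · have heq : (fun y => E.indicator (fun p => c p.1) (t, y))
            = (Icc (-(s t)) (s t)).indicator (fun _ => c t) := by
          funext y
          rw [Set.indicator_apply, Set.indicator_apply]
          have hmem : (t,y) ∈ E ↔ y ∈ Icc (-(s t)) (s t) := by
            simp only [hE, mem_setOf_eq, mem_Icc, ← abs_le]
            exact ⟨fun hq => hq.2, fun hq => ⟨htr, hq⟩⟩
          simp only [hmem]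
        rw [heq, lintegral_indicator measurableSet_Icc, setLIntegral_const,
          Real.volume_Icc, Set.indicator_of_mem (mem_Icc.mpr (abs_le.1 htr))]
        rw [hh]
        congr 2
        ring
      · have heq : (fun y => E.indicator (fun p => c p.1) (t, y)) = fun _ => 0 := by
          funext y
          rw [Set.indicator_apply, if_neg]
          intro hmem
          exact htr hmem.1
        rw [heq, lintegral_zero, indicator_of_notMem (by rwa [mem_Icc, ← abs_le])]
    simp_rw [inner]
    rw [lintegral_indicator measurableSet_Icc]
  -- Step 3: split
  have step3 : ∫⁻ t in Icc (-r) r, h t ≤ (∫⁻ t in Icc (-r) 0, h t) + ∫⁻ t in Ioc 0 r, h t := by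
    rw [show Icc (-r) r = Icc (-r) 0 ∪ Ioc 0 r from
      (Set.Icc_union_Ioc_eq_Icc (by linarith) hr0.le).symm]
    exact lintegral_union_le _ _ _
  have hheven : ∀ t, h (-t) = h t := by
    intro t; rw [hh]; simp [hc, hs_even t]
  have hneg : (∫⁻ t in Icc (-r) 0, h t) = ∫⁻ t in Icc 0 r, h t := by
    have hmp : MeasurePreserving (fun x : ℝ => -x) volume volume :=
      Measure.measurePreserving_neg _
    calc (∫⁻ t in Icc (-r) 0, h t)
        = ∫⁻ t in Icc (-r) 0, h t ∂(Measure.map (fun x : ℝ => -x) volume) := by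
          rw [hmp.map_eq]
      _ = ∫⁻ x in (fun x : ℝ => -x) ⁻¹' Icc (-r) 0, h (-x) :=
          setLIntegral_map measurableSet_Icc hhmeas measurable_neg
      _ = ∫⁻ x in Icc 0 r, h x := by
          rw [show ((fun x : ℝ => -x) ⁻¹' Icc (-r) 0) = Icc 0 r from by
            ext x
            simp only [mem_preimage, mem_Icc]
            constructor <;> intro hx <;> constructor <;> linarith [hx.1, hx.2]]
          simp_rw [hheven]
  have hIcc_Ioo : volume.restrict (Icc (0:ℝ) r) = volume.restrict (Ioo (0:ℝ) r) :=
    (Measure.restrict_congr_set Ioo_ae_eq_Icc).symm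
  have hIoc_Ioo : volume.restrict (Ioc (0:ℝ) r) = volume.restrict (Ioo (0:ℝ) r) :=
    (Measure.restrict_congr_set Ioo_ae_eq_Ioc).symm
  -- Step 4: value on Ioo
  have step4 : (∫⁻ t in Ioo (0:ℝ) r, h t)
      = ENNReal.ofReal (2 * ∫ t in Ioo (0:ℝ) r, s t / t ^ n) := by
    have hptw : ∀ t ∈ Ioo (0:ℝ) r, h t = ENNReal.ofReal (2 * (s t / t ^ n)) := by
      intro t ht
      rw [hh]
      show ENNReal.ofReal ((|t| ^ n)⁻¹) * ENNReal.ofReal (2 * s t) = _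
      rw [abs_of_pos ht.1, ← ENNReal.ofReal_mul (inv_nonneg.2 (pow_nonneg ht.1.le n))]
      congr 1
      field_simp
    rw [setLIntegral_congr_fun measurableSet_Ioo hptw]
    rw [← ofReal_integral_eq_lintegral_ofReal (hint.const_mul 2)
      (Filter.Eventually.of_forall fun t => mul_nonneg (by norm_num) (hfnn t))]
    rw [integral_const_mul]
  have hI : 0 ≤ ∫ t in Ioo (0:ℝ) r, s t / t ^ n := integral_nonneg hfnn
  calc (∫⁻ p in E, ENNReal.ofReal ((Real.sqrt (p.1 ^ 2 + p.2 ^ 2) ^ n)⁻¹))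
      ≤ ∫⁻ p in E, c p.1 := step1
    _ = ∫⁻ t in Icc (-r) r, h t := step2
    _ ≤ (∫⁻ t in Icc (-r) 0, h t) + ∫⁻ t in Ioc 0 r, h t := step3
    _ = (∫⁻ t in Ioo (0:ℝ) r, h t) + ∫⁻ t in Ioo (0:ℝ) r, h t := by
        rw [hneg, hIcc_Ioo, hIoc_Ioo]
    _ = ENNReal.ofReal (2 * ∫ t in Ioo (0:ℝ) r, s t / t ^ n)
        + ENNReal.ofReal (2 * ∫ t in Ioo (0:ℝ) r, s t / t ^ n) := by rw [step4]
    _ = ENNReal.ofReal (4 * ∫ t in Ioo (0:ℝ) r, s t / t ^ n) := by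
        rw [← ENNReal.ofReal_add (by positivity) (by positivity)]
        congr 1
        ring
end

section
/- Godefroy–Shapiro criterion: Let X be a separable Banach space and T : X → X a bounded operator. If both span{x ∈ X : Tx = λx for some λ ∈ ℂ with |λ| < 1} and span{x ∈ X : Tx = λx for some λ ∈ ℂ with |λ| > 1} are dense in X, then T is topologically mixing, i.e., for all nonempty open sets U, V ⊆ X there is N such that T^n(U) ∩ V ≠ ∅ for all n ≥ N. -/
open Filter Topology

lemma pow_apply_eigen {X : Type*} [NormedAddCommGroup X] [NormedSpace ℂ X]
    (T : X →L[ℂ] X) {x : X} {l : ℂ} (h : T x = l • x) (n : ℕ) :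
    (T ^ n) x = l ^ n • x := by
  induction n with
  | zero => simp
  | succ n ih =>
    rw [pow_succ, ContinuousLinearMap.mul_apply, h, map_smul, ih, smul_smul, ← pow_succ']

lemma tendsto_small {X : Type*} [NormedAddCommGroup X] [NormedSpace ℂ X]
    (T : X →L[ℂ] X) {x : X}
    (hx : x ∈ (Submodule.span ℂ {x : X | ∃ l : ℂ, ‖l‖ < 1 ∧ T x = l • x} : Submodule ℂ X)) :
    Tendsto (fun n : ℕ => (T ^ n) x) atTop (𝓝 0) := by
  induction hx using Submodule.span_induction with
  | mem x h =>
    obtain ⟨l, hl, hTx⟩ := h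
    have h1 : Tendsto (fun n : ℕ => l ^ n) atTop (𝓝 0) :=
      tendsto_pow_atTop_nhds_zero_of_norm_lt_one hl
    have := h1.smul_const x
    simpa [pow_apply_eigen T hTx] using this
  | zero => simp [tendsto_const_nhds]
  | add x y hx hy ihx ihy => simpa using ihx.add ihy
  | smul a x hx ih => simpa using (tendsto_const_nhds (x := a)).smul ih

lemma exists_back {X : Type*} [NormedAddCommGroup X] [NormedSpace ℂ X]
    (T : X →L[ℂ] X) {y : X}
    (hy : y ∈ (Submodule.span ℂ {x : X | ∃ l : ℂ, 1 < ‖l‖ ∧ T x = l • x} : Submodule ℂ X)) :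
    ∃ w : ℕ → X, Tendsto w atTop (𝓝 0) ∧ ∀ n, (T ^ n) (w n) = y := by
  induction hy using Submodule.span_induction with
  | mem y h =>
    obtain ⟨l, hl, hTy⟩ := h
    have hl0 : l ≠ 0 := by
      intro h; rw [h] at hl; simp at hl; linarith
    refine ⟨fun n => (l⁻¹) ^ n • y, ?_, ?_⟩
    · have h1 : Tendsto (fun n : ℕ => (l⁻¹) ^ n) atTop (𝓝 0) := by
        apply tendsto_pow_atTop_nhds_zero_of_norm_lt_one
        rw [norm_inv]
        rw [inv_lt_one_iff₀]
        right; exact hl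
      simpa using h1.smul_const y
    · intro n
      rw [map_smul, pow_apply_eigen T hTy, smul_smul]
      rw [← mul_pow, inv_mul_cancel₀ hl0, one_pow, one_smul]
  | zero => exact ⟨fun _ => 0, tendsto_const_nhds, by simp⟩
  | add x y hx hy ihx ihy =>
    obtain ⟨w1, hw1, hw1'⟩ := ihx
    obtain ⟨w2, hw2, hw2'⟩ := ihy
    exact ⟨fun n => w1 n + w2 n, by simpa using hw1.add hw2,
      fun n => by rw [map_add, hw1', hw2']⟩
  | smul a x hx ih =>
    obtain ⟨w, hw, hw'⟩ := ih
    exact ⟨fun n => a • w n, by simpa using (tendsto_const_nhds (x := a)).smul hw,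
      fun n => by simp [hw']⟩

theorem stmt18 (X : Type*) [NormedAddCommGroup X] [NormedSpace ℂ X] [CompleteSpace X]
    [TopologicalSpace.SeparableSpace X] (T : X →L[ℂ] X)
    (h1 : Dense ((Submodule.span ℂ {x : X | ∃ l : ℂ, ‖l‖ < 1 ∧ T x = l • x} : Submodule ℂ X) : Set X))
    (h2 : Dense ((Submodule.span ℂ {x : X | ∃ l : ℂ, 1 < ‖l‖ ∧ T x = l • x} : Submodule ℂ X) : Set X)) :
    ∀ U V : Set X, IsOpen U → IsOpen V → U.Nonempty → V.Nonempty →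
      ∃ N : ℕ, ∀ n : ℕ, N ≤ n → ((T ^ n) '' U ∩ V).Nonempty := by
  intro U V hU hV hUne hVne
  obtain ⟨x, hxU, hxs⟩ := h1.exists_mem_open hU hUne
  obtain ⟨y, hyV, hys⟩ := h2.exists_mem_open hV hVne
  have hTx := tendsto_small T hxU
  obtain ⟨w, hw, hw'⟩ := exists_back T hyV
  have hA : ∀ᶠ n in atTop, x + w n ∈ U := by
    have : Tendsto (fun n => x + w n) atTop (𝓝 x) := by
      simpa using (tendsto_const_nhds (x := x)).add hw
    exact this (hU.mem_nhds hxs)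
  have hB : ∀ᶠ n in atTop, (T ^ n) x + y ∈ V := by
    have : Tendsto (fun n => (T ^ n) x + y) atTop (𝓝 y) := by
      simpa using hTx.add (tendsto_const_nhds (x := y))
    exact this (hV.mem_nhds hys)
  obtain ⟨N, hN⟩ := (hA.and hB).exists_forall_of_atTop
  refine ⟨N, fun n hn => ?_⟩
  obtain ⟨hAn, hBn⟩ := hN n hn
  exact ⟨(T ^ n) (x + w n), ⟨x + w n, hAn, rfl⟩, by simpa [map_add, hw' n] using hBn⟩
end
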